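/- Let n ≥ 2 and let {H_iα_i}_{i=1}^{s} be a coset partition of the free group F_n, where H_i < F_n has finite index d_i > 1 and α_i ∈ F_n. If there exist indices 1 ≤ j, k ≤ s with j ≠ k such that ⋂_{i=1}^{s} α_i⁻¹H_iα_i is a proper subgroup of ⋂_{i ≠ j,k} α_i⁻¹H_iα_i, then H_j = H_k; in particular d_j = d_k and the partition has multiplicity. -/
import Mathlib

private lemma coset_step {G : Type*} [Group G] {s : ℕ} {H : Fin s → Subgroup G}
    {α : Fin s → G}
    (hpart : ∀ x : G, ∃! i : Fin s, x * (α i)⁻¹ ∈ H i)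
    {j k : Fin s} {x : G}
    (hL : ∀ i, i ≠ j → i ≠ k → α i * x * (α i)⁻¹ ∈ H i)
    (hxj : α j * x * (α j)⁻¹ ∈ H j) :
    α k * x * (α k)⁻¹ ∈ H k := by
  obtain ⟨i₀, hi₀, _⟩ := hpart (α k * x)
  by_cases h : i₀ = k
  · subst h
    exact hi₀
  · exfalso
    have hc : α i₀ * x * (α i₀)⁻¹ ∈ H i₀ := by
      by_cases hj : i₀ = j
      · subst hj; exact hxj
      · exact hL i₀ hj h
    have hmem : α k * (α i₀)⁻¹ ∈ H i₀ := by
      have e : α k * x * (α i₀)⁻¹ = (α k * (α i₀)⁻¹) * (α i₀ * x * (α i₀)⁻¹) := by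
        group
      rw [e] at hi₀
      exact (mul_mem_cancel_right hc).mp hi₀
    obtain ⟨i₁, hi₁, hu⟩ := hpart (α k)
    have h1 : i₀ = i₁ := hu i₀ hmem
    have h2 : k = i₁ := hu k (by simpa using one_mem (H k))
    exact h (h1.trans h2.symm)

private lemma coset_le {G : Type*} [Group G] {s : ℕ} {H : Fin s → Subgroup G}
    {α : Fin s → G}
    (hpart : ∀ x : G, ∃! i : Fin s, x * (α i)⁻¹ ∈ H i)
    {j k : Fin s} {x : G}
    (hL : ∀ i, i ≠ j → i ≠ k → α i * x * (α i)⁻¹ ∈ H i)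
    (hxj : α j * x * (α j)⁻¹ ∉ H j) : H j ≤ H k := by
  have key : ∀ h : G, h ∈ H j → h * (α j * x * (α k)⁻¹) ∈ H k := by
    intro h hh
    obtain ⟨i₀, hi₀, _⟩ := hpart (h * α j * x)
    have hij : i₀ ≠ j := by
      rintro rfl
      apply hxj
      have e : h * α i₀ * x * (α i₀)⁻¹ = h * (α i₀ * x * (α i₀)⁻¹) := by group
      rw [e] at hi₀
      exact (mul_mem_cancel_left hh).mp hi₀
    have hik : i₀ = k := by
      by_contra hik
      have hc := hL i₀ hij hik
      have hmem : h * α j * (α i₀)⁻¹ ∈ H i₀ := by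
        have e : h * α j * x * (α i₀)⁻¹
            = (h * α j * (α i₀)⁻¹) * (α i₀ * x * (α i₀)⁻¹) := by group
        rw [e] at hi₀
        exact (mul_mem_cancel_right hc).mp hi₀
      obtain ⟨i₁, hi₁, hu⟩ := hpart (h * α j)
      exact hij ((hu i₀ hmem).trans (hu j (by simpa using hh)).symm)
    subst hik
    have e : h * α j * x * (α i₀)⁻¹ = h * (α j * x * (α i₀)⁻¹) := by group
    rwa [e] at hi₀
  intro h hh
  have h1 := key h hh
  have h2 := key 1 (one_mem _)
  rw [one_mul] at h2
  have e : h = h * (α j * x * (α k)⁻¹) * (α j * x * (α k)⁻¹)⁻¹ := by group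
  rw [e]
  exact mul_mem h1 (inv_mem h2)

/-- If the intersection `⋂_{i=1}^{s} α_i⁻¹ H_i α_i` is a proper subgroup of the
partial intersection `⋂_{i ≠ j,k} α_i⁻¹ H_i α_i` (for some `j ≠ k`), then `H j = H k`;
in particular `d j = d k` and the coset partition has multiplicity. -/
theorem eq_subgroups_of_proper_intersection
    (n s : ℕ) (hn : 2 ≤ n)
    (H : Fin s → Subgroup (FreeGroup (Fin n)))
    (α : Fin s → FreeGroup (Fin n))
    (d : Fin s → ℕ)
    (hind : ∀ i, (H i).index = d i)
    (hone : ∀ i, 1 < d i)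
    (hpart : ∀ x : FreeGroup (Fin n), ∃! i : Fin s, x * (α i)⁻¹ ∈ H i)
    (j k : Fin s) (hjk : j ≠ k)
    (hlt : (⨅ i : Fin s, (H i).comap ((MulAut.conj (α i)).toMonoidHom)) <
        (⨅ i ∈ {i : Fin s | i ≠ j ∧ i ≠ k}, (H i).comap ((MulAut.conj (α i)).toMonoidHom))) :
    H j = H k ∧ d j = d k ∧ ∃ i i', i ≠ i' ∧ d i = d i' := by
  obtain ⟨x, hxL, hxK⟩ := SetLike.exists_of_lt hlt
  simp only [Subgroup.mem_iInf, Set.mem_setOf_eq, Subgroup.mem_comap,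
    MulEquiv.coe_toMonoidHom, MulAut.conj_apply] at hxL hxK
  push_neg at hxK
  have hL : ∀ i, i ≠ j → i ≠ k → α i * x * (α i)⁻¹ ∈ H i := fun i h1 h2 =>
    hxL i ⟨h1, h2⟩
  have hL' : ∀ i, i ≠ k → i ≠ j → α i * x * (α i)⁻¹ ∈ H i := fun i h1 h2 =>
    hxL i ⟨h2, h1⟩
  have hxj : α j * x * (α j)⁻¹ ∉ H j := by
    intro hmem
    obtain ⟨i, hi⟩ := hxK
    have hk' : α k * x * (α k)⁻¹ ∈ H k := coset_step hpart hL hmem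
    apply hi
    by_cases h1 : i = j
    · subst h1; exact hmem
    · by_cases h2 : i = k
      · subst h2; exact hk'
      · exact hL i h1 h2
  have hxk : α k * x * (α k)⁻¹ ∉ H k := fun hmem =>
    hxj (coset_step hpart hL' hmem)
  have heq : H j = H k :=
    le_antisymm (coset_le hpart hL hxj) (coset_le hpart hL' hxk)
  refine ⟨heq, ?_, j, k, hjk, ?_⟩ <;>
    rw [← hind j, ← hind k, heq]
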